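/- Let n ≥ 3, F > 0, ξ ∈ ℝ, η ∈ ℝ^{n-1}, and let S be a symmetric bilinear form on ℝ^{n-1}. Suppose that for every unit vector ω ∈ ℝ^{n-1}, S(w(ω), w(ω)) = 0, where w(ω) = ((ω·η)/(ξ²+F²)) η + ω. Then S = 0. -/
import Mathlib


open scoped RealInnerProductSpace

/-- main linear-algebra content of 2-tensor ellipticity at finite
points: vanishing of a symmetric bilinear form on all vectors
`w(ω) = ((ω·η)/(ξ²+F²)) η + ω`, `ω` a unit vector, forces it to vanish. -/
theorem stmt5 (n : ℕ) (hn : 3 ≤ n) (F ξ : ℝ) (hF : 0 < F)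
    (η : EuclideanSpace ℝ (Fin (n-1)))
    (S : EuclideanSpace ℝ (Fin (n-1)) →ₗ[ℝ] EuclideanSpace ℝ (Fin (n-1)) →ₗ[ℝ] ℝ)
    (hsymm : ∀ x y, S x y = S y x)
    (h : ∀ ω : EuclideanSpace ℝ (Fin (n-1)), ‖ω‖ = 1 →
      S ((⟪ω, η⟫ / (ξ^2 + F^2)) • η + ω) ((⟪ω, η⟫ / (ξ^2 + F^2)) • η + ω) = 0) :
    S = 0 := by
  have hdpos : (0:ℝ) < ξ^2 + F^2 := by positivity
  set w : EuclideanSpace ℝ (Fin (n-1)) → EuclideanSpace ℝ (Fin (n-1)) :=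
    fun ω => (⟪ω, η⟫ / (ξ^2 + F^2)) • η + ω with hw
  have hlin : ∀ (t : ℝ) ω, w (t • ω) = t • w ω := by
    intro t ω
    simp only [hw, real_inner_smul_left, smul_add, smul_smul]
    congr 1
    rw [mul_div_assoc]
  have h0 : ∀ ω, S (w ω) (w ω) = 0 := by
    intro ω
    rcases eq_or_ne ω 0 with rfl | hω
    · simp [hw]
    · have hnz : ‖ω‖ ≠ 0 := norm_ne_zero_iff.mpr hω
      have hn1 : ‖(‖ω‖⁻¹ • ω : EuclideanSpace ℝ (Fin (n-1)))‖ = 1 := by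
        rw [norm_smul, norm_inv, norm_norm, inv_mul_cancel₀ hnz]
      have hh := h (‖ω‖⁻¹ • ω) hn1
      rw [show ((⟪(‖ω‖⁻¹ • ω : EuclideanSpace ℝ (Fin (n-1))), η⟫ / (ξ^2 + F^2)) • η
          + ‖ω‖⁻¹ • ω) = w (‖ω‖⁻¹ • ω) from rfl, hlin] at hh
      simp only [map_smul, LinearMap.smul_apply, smul_eq_mul] at hh
      have hne : (‖ω‖⁻¹ : ℝ) ≠ 0 := inv_ne_zero hnz
      rcases mul_eq_zero.mp hh with h1 | h1
      · exact absurd h1 hne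
      rcases mul_eq_zero.mp h1 with h2 | h2
      · exact absurd h2 hne
      · exact h2
  have hpol : ∀ x y, S (w x) (w y) = 0 := by
    intro x y
    have hxy := h0 (x + y)
    have hwadd : w (x + y) = w x + w y := by
      simp only [hw, inner_add_left, add_div, add_smul]
      abel
    rw [hwadd] at hxy
    simp only [map_add, LinearMap.add_apply] at hxy
    rw [h0 x, h0 y, hsymm (w y) (w x)] at hxy
    linarith
  have hsurj : ∀ u, ∃ x, w x = u := by
    intro u
    set d : ℝ := 1 / (ξ^2 + F^2 + ‖η‖^2) with hd'
    have hden : (0:ℝ) < ξ^2 + F^2 + ‖η‖^2 := by positivity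
    refine ⟨u - (d * ⟪u, η⟫) • η, ?_⟩
    simp only [hw, inner_sub_left, real_inner_smul_left, real_inner_self_eq_norm_sq]
    have key : (⟪u, η⟫ - d * ⟪u, η⟫ * ‖η‖^2) / (ξ^2 + F^2) = d * ⟪u, η⟫ := by
      rw [div_eq_iff (ne_of_gt hdpos), hd']
      field_simp
      ring
    rw [key]
    abel
  apply LinearMap.ext; intro u
  apply LinearMap.ext; intro v
  obtain ⟨x, hx⟩ := hsurj u
  obtain ⟨y, hy⟩ := hsurj v
  simp only [LinearMap.zero_apply, ← hx, ← hy]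
  exact hpol x y
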